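/- Let L ∈ ℕ and a = (a_0, …, a_L) ∈ ℝ^{L+1} with a_0 = −1. Let I be a finite index set, let λ : I → ℝ with λ_i ≥ 0 for all i, and let (N_i)_{i ∈ I} be independent random variables where N_i is Poisson with mean λ_i when λ_i > 0 and N_i = 0 almost surely when λ_i = 0. Let S = #{i ∈ I : λ_i > 0} and Ŝ = Σ_{i ∈ I} g_L(N_i). Then E[(Ŝ − S)²] = Σ_{i : λ_i > 0} ( Σ_{l=0}^L e^{−λ_i} a_l² λ_i^l l! ) + Σ_{i ≠ j : λ_i > 0, λ_j > 0} ( e^{−λ_i} P_L(λ_i, a) )·( e^{−λ_j} P_L(λ_j, a) ). -/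

import Mathlib

open Finset MeasureTheory ProbabilityTheory

/-- `P L a x = ∑_{l=0}^L a_l x^l`. -/
noncomputable def P (L : ℕ) (a : ℕ → ℝ) (x : ℝ) : ℝ :=
  ∑ l ∈ range (L + 1), a l * x ^ l

/-- The estimator function `g_L`: `g_L(j) = a_j·j! + 1` for `j ≤ L`, and `g_L(j) = 1`
for `j > L`. -/
noncomputable def gL (L : ℕ) (a : ℕ → ℝ) (j : ℕ) : ℝ :=
  if j ≤ L then a j * (j.factorial : ℝ) + 1 else 1

lemma aux_int {Ω : Type*} [MeasurableSpace Ω] (μ : Measure Ω) [IsProbabilityMeasure μ]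
    {f : Ω → ℝ} (hm : Measurable f) {C : ℝ} (hb : ∀ ω, |f ω| ≤ C) : Integrable f μ :=
  ⟨hm.aestronglyMeasurable, HasFiniteIntegral.of_bounded (C := C)
    (Filter.Eventually.of_forall fun ω => by simpa [Real.norm_eq_abs] using hb ω)⟩

lemma aux_pois (L : ℕ) (r : ℝ) (hr : 0 < r) (h : ℕ → ℝ) (hsupp : ∀ n, L < n → h n = 0) :
    ∫ n, h n ∂(poissonMeasure r.toNNReal)
      = ∑ n ∈ range (L + 1), Real.exp (-r) * r ^ n / n.factorial * h n := by
  have hint : Integrable h (poissonMeasure r.toNNReal) := by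
    refine aux_int _ measurable_from_nat (C := ∑ n ∈ range (L + 1), |h n|) fun n => ?_
    by_cases hn : n ≤ L
    · exact Finset.single_le_sum (f := fun n => |h n|) (fun _ _ => abs_nonneg _)
        (by simpa using Nat.lt_succ_of_le hn)
    · simp only [hsupp n (not_le.1 hn), abs_zero]
      exact Finset.sum_nonneg fun _ _ => abs_nonneg _
  rw [integral_countable hint]
  rw [tsum_eq_sum (s := range (L + 1)) (fun n hn => by
    rw [hsupp n (by simpa using hn), smul_zero])]
  refine Finset.sum_congr rfl fun n _ => ?_
  rw [poissonMeasure_real_singleton, Real.coe_toNNReal _ hr.le, smul_eq_mul]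

lemma aux_m1 (L : ℕ) (a : ℕ → ℝ) (r : ℝ) (hr : 0 < r) :
    ∫ n, (gL L a n - 1) ∂(poissonMeasure r.toNNReal) = Real.exp (-r) * P L a r := by
  rw [aux_pois L r hr _ (fun n hn => by simp [gL, Nat.not_le.2 hn]), P, Finset.mul_sum]
  refine Finset.sum_congr rfl fun n hn => ?_
  rw [gL, if_pos (by simpa using Nat.lt_succ_iff.1 (Finset.mem_range.1 hn))]
  have hfac : (n.factorial : ℝ) ≠ 0 := Nat.cast_ne_zero.2 n.factorial_ne_zero
  field_simp
  ring

lemma aux_m2 (L : ℕ) (a : ℕ → ℝ) (r : ℝ) (hr : 0 < r) :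
    ∫ n, (gL L a n - 1) ^ 2 ∂(poissonMeasure r.toNNReal)
      = ∑ l ∈ range (L + 1), Real.exp (-r) * (a l) ^ 2 * r ^ l * (l.factorial : ℝ) := by
  rw [aux_pois L r hr _ (fun n hn => by simp [gL, Nat.not_le.2 hn])]
  refine Finset.sum_congr rfl fun n hn => ?_
  rw [gL, if_pos (by simpa using Nat.lt_succ_iff.1 (Finset.mem_range.1 hn))]
  have hfac : (n.factorial : ℝ) ≠ 0 := Nat.cast_ne_zero.2 n.factorial_ne_zero
  field_simp
  ring

open Classical in
theorem stmt_15 {Ω : Type*} [MeasurableSpace Ω] (μ : Measure Ω) [IsProbabilityMeasure μ]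
    {I : Type*} [Fintype I] (L : ℕ) (a : ℕ → ℝ) (ha0 : a 0 = -1)
    (lam : I → ℝ) (hlam : ∀ i, 0 ≤ lam i)
    (N : I → Ω → ℕ) (hmeas : ∀ i, Measurable (N i))
    (hindep : iIndepFun N μ)
    (hpois : ∀ i, 0 < lam i → μ.map (N i) = poissonMeasure (lam i).toNNReal)
    (hzero : ∀ i, lam i = 0 → ∀ᵐ ω ∂μ, N i ω = 0) :
    (∫ ω, ((∑ i : I, gL L a (N i ω)) -
        ((Finset.univ.filter fun i : I => 0 < lam i).card : ℝ)) ^ 2 ∂μ)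
      = (∑ i ∈ Finset.univ.filter fun i : I => 0 < lam i,
          ∑ l ∈ range (L + 1),
            Real.exp (-(lam i)) * (a l) ^ 2 * (lam i) ^ l * (l.factorial : ℝ))
        + ∑ p ∈ (Finset.univ.filter fun i : I => 0 < lam i).offDiag,
            (Real.exp (-(lam p.1)) * P L a (lam p.1)) *
              (Real.exp (-(lam p.2)) * P L a (lam p.2)) := by
  set s : Finset I := Finset.univ.filter fun i : I => 0 < lam i with hs
  set c : I → ℝ := fun i => if 0 < lam i then (1 : ℝ) else 0 with hc
  set f : I → Ω → ℝ := fun i ω => gL L a (N i ω) - c i with hf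
  set C : ℝ := (∑ l ∈ range (L + 1), |a l * (l.factorial : ℝ)|) + 2 with hC
  have hsum_nonneg : (0 : ℝ) ≤ ∑ l ∈ range (L + 1), |a l * (l.factorial : ℝ)| :=
    Finset.sum_nonneg fun _ _ => abs_nonneg _
  have hCpos : (0 : ℝ) ≤ C := by rw [hC]; linarith
  have hg : ∀ n, |gL L a n| ≤ C - 1 := by
    intro n
    rw [gL, hC]
    split
    · refine (abs_add_le _ _).trans ?_
      have := Finset.single_le_sum (f := fun l => |a l * (l.factorial : ℝ)|)
        (fun _ _ => abs_nonneg _) (Finset.mem_range.2 (Nat.lt_succ_of_le ‹n ≤ L›))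
      rw [abs_one]; linarith
    · rw [abs_one]; linarith
  have hfb : ∀ i ω, |f i ω| ≤ C := by
    intro i ω
    refine (abs_sub _ _).trans ?_
    have h1 := hg (N i ω)
    have h2 : |c i| ≤ 1 := by rw [hc]; dsimp only; split <;> simp
    linarith
  have hfmeas : ∀ i, Measurable (f i) := fun i =>
    (measurable_from_nat (f := fun n => gL L a n - c i)).comp (hmeas i)
  have hfint : ∀ i, Integrable (f i) μ := fun i => aux_int μ (hfmeas i) (hfb i)
  have hprod : ∀ i j, Integrable (fun ω => f i ω * f j ω) μ := by
    intro i j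
    refine aux_int μ ((hfmeas i).mul (hfmeas j)) (C := C * C) fun ω => ?_
    rw [abs_mul]
    exact mul_le_mul (hfb i ω) (hfb j ω) (abs_nonneg _) hCpos
  -- transfer to the Poisson measure
  have key : ∀ (g : ℕ → ℝ) i, 0 < lam i →
      ∫ ω, g (N i ω) ∂μ = ∫ n, g n ∂(poissonMeasure (lam i).toNNReal) := by
    intro g i hi
    rw [← hpois i hi,
      integral_map (hmeas i).aemeasurable measurable_from_nat.aestronglyMeasurable]
  -- a.e. zero case
  have hzf : ∀ i, ¬ 0 < lam i → f i =ᵐ[μ] 0 := by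
    intro i hi
    have h0 : lam i = 0 := le_antisymm (not_lt.1 hi) (hlam i)
    filter_upwards [hzero i h0] with ω hω
    simp [hf, hc, hω, hi, gL, ha0]
  have hm : ∀ i, ∫ ω, f i ω ∂μ =
      (if 0 < lam i then Real.exp (-(lam i)) * P L a (lam i) else 0) := by
    intro i
    by_cases hi : 0 < lam i
    · rw [if_pos hi]
      have hci : c i = 1 := by rw [hc]; exact if_pos hi
      have : (fun ω => f i ω) = fun ω => (fun n => gL L a n - 1) (N i ω) := by
        funext ω; rw [hf]; dsimp only; rw [hci]
      rw [this]; exact (key _ i hi).trans (aux_m1 L a _ hi)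
    · rw [if_neg hi, integral_congr_ae (hzf i hi)]; simp
  have hv : ∀ i, ∫ ω, (f i ω) ^ 2 ∂μ =
      (if 0 < lam i then
        ∑ l ∈ range (L + 1),
          Real.exp (-(lam i)) * (a l) ^ 2 * (lam i) ^ l * (l.factorial : ℝ) else 0) := by
    intro i
    by_cases hi : 0 < lam i
    · rw [if_pos hi]
      have hci : c i = 1 := by rw [hc]; exact if_pos hi
      have : (fun ω => (f i ω) ^ 2) = fun ω => (fun n => (gL L a n - 1) ^ 2) (N i ω) := by
        funext ω; rw [hf]; dsimp only; rw [hci]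
      rw [this]; exact (key _ i hi).trans (aux_m2 L a _ hi)
    · rw [if_neg hi]
      have : (fun ω => (f i ω) ^ 2) =ᵐ[μ] 0 := by
        filter_upwards [hzf i hi] with ω hω
        simp [hω]
      rw [integral_congr_ae this]; simp
  have hind : ∀ i j, i ≠ j →
      ∫ ω, f i ω * f j ω ∂μ = (∫ ω, f i ω ∂μ) * ∫ ω, f j ω ∂μ := by
    intro i j hij
    have h1 : IndepFun (f i) (f j) μ :=
      (hindep.indepFun hij).comp
        (φ := fun n => gL L a n - c i) (ψ := fun n => gL L a n - c j)
        measurable_from_nat measurable_from_nat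
    exact h1.integral_fun_mul_eq_mul_integral (hfint i).aestronglyMeasurable (hfint j).aestronglyMeasurable
  -- main computation
  have step1 : (∫ ω, ((∑ i : I, gL L a (N i ω)) - (s.card : ℝ)) ^ 2 ∂μ)
      = ∫ ω, ∑ p ∈ (Finset.univ : Finset I) ×ˢ Finset.univ, f p.1 ω * f p.2 ω ∂μ := by
    congr 1
    funext ω
    have : (∑ i : I, gL L a (N i ω)) - (s.card : ℝ) = ∑ i : I, f i ω := by
      rw [hf]
      dsimp only
      rw [Finset.sum_sub_distrib]
      congr 1
      rw [hc, hs]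
      simp [Finset.sum_boole]
    rw [this, sq, Finset.sum_mul_sum, ← Finset.sum_product']
  rw [step1, integral_finset_sum _ (fun p _ => hprod p.1 p.2)]
  rw [← Finset.diag_union_offDiag (Finset.univ : Finset I),
    Finset.sum_union (Finset.disjoint_diag_offDiag _), Finset.sum_diag]
  congr 1
  · -- diagonal part
    have h1 : ∀ i : I, ∫ ω, f i ω * f i ω ∂μ = ∫ ω, (f i ω) ^ 2 ∂μ := by
      intro i; congr 1; funext ω; ring
    calc ∑ i : I, ∫ ω, f i ω * f i ω ∂μ
        = ∑ i : I, (if 0 < lam i then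
            ∑ l ∈ range (L + 1),
              Real.exp (-(lam i)) * (a l) ^ 2 * (lam i) ^ l * (l.factorial : ℝ) else 0) := by
          refine Finset.sum_congr rfl fun i _ => ?_
          rw [h1 i, hv i]
      _ = ∑ i ∈ s, (if 0 < lam i then
            ∑ l ∈ range (L + 1),
              Real.exp (-(lam i)) * (a l) ^ 2 * (lam i) ^ l * (l.factorial : ℝ) else 0) := by
          refine (Finset.sum_subset (Finset.subset_univ s) fun i _ hi => ?_).symm
          rw [if_neg (by simpa [hs] using hi)]
      _ = _ := by
          refine Finset.sum_congr rfl fun i hi => ?_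
          rw [if_pos (by simpa [hs] using hi)]
  · -- off-diagonal part
    calc ∑ p ∈ (Finset.univ : Finset I).offDiag, ∫ ω, f p.1 ω * f p.2 ω ∂μ
        = ∑ p ∈ (Finset.univ : Finset I).offDiag,
            (if 0 < lam p.1 then Real.exp (-(lam p.1)) * P L a (lam p.1) else 0) *
            (if 0 < lam p.2 then Real.exp (-(lam p.2)) * P L a (lam p.2) else 0) := by
          refine Finset.sum_congr rfl fun p hp => ?_
          rw [hind p.1 p.2 (Finset.mem_offDiag.1 hp).2.2, hm p.1, hm p.2]
      _ = ∑ p ∈ s.offDiag,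
            (if 0 < lam p.1 then Real.exp (-(lam p.1)) * P L a (lam p.1) else 0) *
            (if 0 < lam p.2 then Real.exp (-(lam p.2)) * P L a (lam p.2) else 0) := by
          refine (Finset.sum_subset (Finset.offDiag_mono (Finset.subset_univ s))
            fun p hp hps => ?_).symm
          rcases Finset.mem_offDiag.1 hp with ⟨-, -, hne⟩
          by_cases h1 : 0 < lam p.1
          · by_cases h2 : 0 < lam p.2
            · exact absurd (Finset.mem_offDiag.2
                ⟨by simp [hs, h1], by simp [hs, h2], hne⟩) hps
            · rw [if_neg h2, mul_zero]
          · rw [if_neg h1, zero_mul]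
      _ = _ := by
          refine Finset.sum_congr rfl fun p hp => ?_
          rcases Finset.mem_offDiag.1 hp with ⟨h1, h2, -⟩
          rw [if_pos (by simpa [hs] using h1), if_pos (by simpa [hs] using h2)]
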